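/- In the single-user AWGN energy minimization problem over T time blocks, any feasible power allocation achieving the minimum total energy must be the equal-power allocation: if P : Fin T → ℝ satisfies P t ≥ 0 for all t, D ≤ ∑_t log₂(1 + P t), and ∑_t P t = T·(2^{D/T} − 1), then P t = 2^{D/T} − 1 for every t. -/

import Mathlib

/-- Uniqueness of the optimal allocation: any feasible power allocation attaining the
minimum total energy `T * (2^(D/T) - 1)` must be the equal-power allocation. -/
theorem awgn_optimal_allocation_unique (T : ℕ) (hT : 0 < T) (D : ℝ) (hD : 0 ≤ D)
    (P : Fin T → ℝ) (hP : ∀ t, 0 ≤ P t)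
    (hfeas : D ≤ ∑ t, Real.logb 2 (1 + P t))
    (hsum : ∑ t, P t = (T : ℝ) * ((2 : ℝ) ^ (D / (T : ℝ)) - 1)) :
    ∀ t, P t = (2 : ℝ) ^ (D / (T : ℝ)) - 1 := by
  set m : ℝ := (2 : ℝ) ^ (D / (T : ℝ)) - 1 with hm
  have hT' : (0 : ℝ) < T := Nat.cast_pos.mpr hT
  have h2 : (1 : ℝ) ≤ (2 : ℝ) ^ (D / (T : ℝ)) := by
    calc (1 : ℝ) = (2 : ℝ) ^ (0 : ℝ) := (Real.rpow_zero 2).symm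
    _ ≤ _ := Real.rpow_le_rpow_of_exponent_le one_le_two (div_nonneg hD hT'.le)
  have h1pm : (0 : ℝ) < 1 + m := by simp only [hm]; linarith
  -- tangent line bound
  have tangent : ∀ x : ℝ, 0 ≤ x →
      Real.log (1 + x) - Real.log (1 + m) - (x - m) / (1 + m) ≤ 0 := by
    intro x hx
    have h1x : (0 : ℝ) < 1 + x := by linarith
    have h := Real.log_le_sub_one_of_pos (div_pos h1x h1pm)
    rw [Real.log_div h1x.ne' h1pm.ne'] at h
    have heq : (1 + x) / (1 + m) - 1 = (x - m) / (1 + m) := by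
      field_simp
      ring
    linarith [heq ▸ h]
  have tangent_strict : ∀ x : ℝ, 0 ≤ x → x ≠ m →
      Real.log (1 + x) - Real.log (1 + m) - (x - m) / (1 + m) < 0 := by
    intro x hx hne
    have h1x : (0 : ℝ) < 1 + x := by linarith
    have hne1 : (1 + x) / (1 + m) ≠ 1 := by
      intro h
      apply hne
      field_simp at h
      linarith
    have h := Real.log_lt_sub_one_of_pos (div_pos h1x h1pm) hne1
    rw [Real.log_div h1x.ne' h1pm.ne'] at h
    have heq : (1 + x) / (1 + m) - 1 = (x - m) / (1 + m) := by
      field_simp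
      ring
    linarith [heq ▸ h]
  -- the sum of the tangent defects is nonnegative
  have hlog2 : (0 : ℝ) < Real.log 2 := Real.log_pos one_lt_two
  have hfeas' : D * Real.log 2 ≤ ∑ t, Real.log (1 + P t) := by
    have hlogb : ∑ t, Real.logb 2 (1 + P t) = (∑ t, Real.log (1 + P t)) / Real.log 2 := by
      simp [Real.logb, Finset.sum_div]
    rw [hlogb] at hfeas
    exact (le_div_iff₀ hlog2).mp hfeas
  have hlogm : Real.log (1 + m) = (D / T) * Real.log 2 := by
    have : (1 : ℝ) + m = (2 : ℝ) ^ (D / (T : ℝ)) := by simp [hm]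
    rw [this, Real.log_rpow two_pos]
  have hsumf : 0 ≤ ∑ t, (Real.log (1 + P t) - Real.log (1 + m) - (P t - m) / (1 + m)) := by
    have hsplit : ∑ t, (Real.log (1 + P t) - Real.log (1 + m) - (P t - m) / (1 + m))
        = (∑ t, Real.log (1 + P t)) - T * Real.log (1 + m)
          - ((∑ t, P t) - T * m) / (1 + m) := by
      rw [Finset.sum_sub_distrib, Finset.sum_sub_distrib, Finset.sum_const,
        Finset.card_univ, Fintype.card_fin, ← Finset.sum_div, Finset.sum_sub_distrib,
        Finset.sum_const, Finset.card_univ, Fintype.card_fin]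
      push_cast
      ring
    rw [hsplit, hsum, hlogm]
    have hTlog : (T : ℝ) * ((D / T) * Real.log 2) = D * Real.log 2 := by
      field_simp
    rw [hTlog]
    have : ((T : ℝ) * m - (T : ℝ) * m) / (1 + m) = 0 := by simp
    rw [this]
    linarith
  -- conclude each term is zero
  intro t
  by_contra hne
  have hlt : ∑ s, (Real.log (1 + P s) - Real.log (1 + m) - (P s - m) / (1 + m))
      < ∑ _s : Fin T, (0 : ℝ) := by
    apply Finset.sum_lt_sum
    · intro i _
      exact tangent (P i) (hP i)
    · exact ⟨t, Finset.mem_univ t, tangent_strict (P t) (hP t) hne⟩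
  simp only [Finset.sum_const_zero] at hlt
  linarith
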